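/- Let Ĝ be a Hausdorff topological group and Γ a dense subgroup of Ĝ such that every normal subgroup of Γ is either contained in the center of Γ or equal to Γ. Let C be a normal subgroup of Ĝ and let σ be a continuous automorphism of Ĝ (with continuous inverse) such that σ(Γ) ⊆ Γ and σ(c) = c for every c ∈ C. Suppose there exists γ₀ ∈ Γ such that γ₀·σ(γ₀)⁻¹ does not lie in the center of Γ (i.e., it fails to commute with some element of Γ). Then C is contained in the center of Ĝ: every element of C commutes with every element of Ĝ. -/

import Mathlib

/-- Let `Ĝ` be a Hausdorff topological group and `Γ` a dense subgroup such that every subgroup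
of `Γ` which is normal in `Γ` is either contained in the center of `Γ` or equal to `Γ`.  Let
`C` be a normal subgroup of `Ĝ` and `σ` a continuous automorphism of `Ĝ` (with continuous
inverse) with `σ(Γ) ⊆ Γ` fixing `C` pointwise.  If some `γ₀ ∈ Γ` is such that `γ₀·σ(γ₀)⁻¹`
fails to commute with some element of `Γ`, then `C` is contained in the center of `Ĝ`. -/
theorem dense_subgroup_automorphism_central
    (G : Type*) [Group G] [TopologicalSpace G] [IsTopologicalGroup G] [T2Space G]
    (Γ : Subgroup G) (hdense : Dense (Γ : Set G))
    (hΓ : ∀ N : Subgroup G, N ≤ Γ → (∀ g ∈ Γ, ∀ x ∈ N, g * x * g⁻¹ ∈ N) →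
      (∀ x ∈ N, ∀ γ ∈ Γ, Commute x γ) ∨ N = Γ)
    (C : Subgroup G) (hC : C.Normal)
    (σ : G ≃* G) (hσcont : Continuous σ) (hσinv : Continuous σ.symm)
    (hσΓ : ∀ γ ∈ Γ, σ γ ∈ Γ)
    (hσC : ∀ c ∈ C, σ c = c)
    (γ₀ : G) (hγ₀ : γ₀ ∈ Γ)
    (hnc : ∃ δ ∈ Γ, ¬ Commute (γ₀ * (σ γ₀)⁻¹) δ) :
    ∀ c ∈ C, ∀ g : G, Commute c g := by
  -- The key subgroup: elements of Γ centralizing C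
  set N : Subgroup G := Γ ⊓ Subgroup.centralizer (C : Set G) with hN
  have hNle : N ≤ Γ := inf_le_left
  -- N is normal in Γ (uses normality of C in G)
  have hNnorm : ∀ g ∈ Γ, ∀ x ∈ N, g * x * g⁻¹ ∈ N := by
    intro g hg x hx
    rw [hN, Subgroup.mem_inf] at hx ⊢
    obtain ⟨hxΓ, hxc⟩ := hx
    refine ⟨Γ.mul_mem (Γ.mul_mem hg hxΓ) (Γ.inv_mem hg), ?_⟩
    rw [Subgroup.mem_centralizer_iff] at hxc ⊢
    intro c hc
    have hc' : g⁻¹ * c * g ∈ C := by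
      have := hC.conj_mem c hc g⁻¹
      simpa using this
    have := hxc _ hc'
    -- (g⁻¹ c g) x = x (g⁻¹ c g)  ⟹  c (g x g⁻¹) = (g x g⁻¹) c
    have h2 : c * (g * x * g⁻¹) = g * ((g⁻¹ * c * g) * x) * g⁻¹ := by group
    rw [h2, this]; group
  -- For every γ ∈ Γ, γ * σ(γ)⁻¹ centralizes C, hence lies in N
  have hkey : ∀ γ ∈ Γ, γ * (σ γ)⁻¹ ∈ N := by
    intro γ hγ
    rw [hN, Subgroup.mem_inf]
    refine ⟨Γ.mul_mem hγ (Γ.inv_mem (hσΓ γ hγ)), ?_⟩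
    rw [Subgroup.mem_centralizer_iff]
    intro c hc
    have hc' : γ⁻¹ * c * γ ∈ C := by
      have := hC.conj_mem c hc γ⁻¹
      simpa using this
    have h1 : σ (γ⁻¹ * c * γ) = γ⁻¹ * c * γ := hσC _ hc'
    have h2 : (σ γ)⁻¹ * c * σ γ = γ⁻¹ * c * γ := by
      rw [← h1]
      simp [map_mul, map_inv, hσC c hc]
    -- rearrange to c * (γ * σ(γ)⁻¹) = (γ * σ(γ)⁻¹) * c
    have h3 : c * (γ * (σ γ)⁻¹) = γ * (γ⁻¹ * c * γ) * (σ γ)⁻¹ := by group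
    rw [h3, ← h2]; group
  -- N cannot be central in Γ because of γ₀
  obtain ⟨δ, hδ, hδnc⟩ := hnc
  rcases hΓ N hNle hNnorm with hcent | heq
  · exact absurd (hcent _ (hkey γ₀ hγ₀) δ hδ) hδnc
  -- So N = Γ: every element of Γ centralizes C
  have hΓcent : ∀ γ ∈ Γ, ∀ c ∈ C, c * γ = γ * c := by
    intro γ hγ c hc
    have hγN : γ ∈ N := heq ▸ hγ
    rw [hN, Subgroup.mem_inf] at hγN
    exact hγN.2 c hc
  -- Conclude by density: the centralizer of c is closed
  intro c hc g
  have hclosed : IsClosed {x : G | c * x = x * c} :=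
    isClosed_eq (continuous_const.mul continuous_id) (continuous_id.mul continuous_const)
  have hsub : (Γ : Set G) ⊆ {x : G | c * x = x * c} := fun γ hγ => hΓcent γ hγ c hc
  have : g ∈ {x : G | c * x = x * c} := by
    have := closure_minimal hsub hclosed
    exact this (hdense g)
  exact this
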